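/- Let T be a tree on vertex set V, and let M be a family of subsets X ⊆ V such that each X is the shore of a cut strictly 2-respecting T, i.e., |Δ_T(X)| = 2. Let Q = {Δ_T(X) : X ∈ M} ⊆ E(T)^(2), define the auxiliary graph L on vertex set E(T) with edge set Q, and let F be a spanning forest of L. Then the family S = {shore(f) : f ∈ E(F)} satisfies atoms(S) = atoms(M). -/

import Mathlib

/-- `u` and `v` lie in the same atom of the family `T` of subsets of `V`. -/
def sameAtom {V : Type*} (T : Set (Set V)) (u v : V) : Prop :=
  ∀ X ∈ T, (u ∈ X ↔ v ∈ X)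

/-- `Δ_T(X)`: the set of edges of the graph `T` with exactly one endpoint in `X`. -/
def cutEdges {V : Type*} (T : SimpleGraph V) (X : Set V) : Set (Sym2 V) :=
  {e | e ∈ T.edgeSet ∧ ∃ a b, e = s(a, b) ∧ a ∈ X ∧ b ∉ X}

lemma cutEdges_compl {V : Type*} (T : SimpleGraph V) (X : Set V) :
    cutEdges T Xᶜ = cutEdges T X := by
  ext e
  constructor <;> rintro ⟨he, a, b, rfl, ha, hb⟩
  · exact ⟨he, b, a, Sym2.eq_swap, by simpa using hb, by simpa using ha⟩
  · exact ⟨he, b, a, Sym2.eq_swap, by simpa using hb, by simpa using ha⟩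

lemma mem_cutEdges_iff {V : Type*} {T : SimpleGraph V} {X : Set V} {a b : V}
    (h : T.Adj a b) :
    s(a, b) ∈ cutEdges T X ↔ ¬(a ∈ X ↔ b ∈ X) := by
  constructor
  · rintro ⟨-, c, d, hcd, hc, hd⟩
    rw [Sym2.eq_iff] at hcd
    rcases hcd with ⟨rfl, rfl⟩ | ⟨rfl, rfl⟩ <;> tauto
  · intro hne
    by_cases ha : a ∈ X
    · exact ⟨T.mem_edgeSet.mpr h, a, b, rfl, ha, fun hb => hne ⟨fun _ => hb, fun _ => ha⟩⟩
    · have hb : b ∈ X := by tauto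
      exact ⟨T.mem_edgeSet.mpr h, b, a, Sym2.eq_swap, hb, ha⟩

open Classical in
lemma walk_parity {V : Type*} {T : SimpleGraph V} (X : Set V) :
    ∀ {u v : V} (p : T.Walk u v),
      ((u ∈ X ↔ v ∈ X) ↔ Even (p.edges.countP (fun e => decide (e ∈ cutEdges T X)))) := by
  intro u v p
  induction p with
  | nil => simp
  | @cons a b c h q ih =>
    simp only [SimpleGraph.Walk.edges_cons, List.countP_cons]
    by_cases hab : s(a, b) ∈ cutEdges T X
    · have h1 : ¬(a ∈ X ↔ b ∈ X) := (mem_cutEdges_iff h).mp hab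
      simp only [hab, ih]
      rw [show (if (decide True = true) then 1 else 0) = 1 by simp, Nat.even_add_one]
      tauto
    · have h1 : (a ∈ X ↔ b ∈ X) := by
        by_contra hc
        exact hab ((mem_cutEdges_iff h).mpr hc)
      simp only [hab, ih]
      rw [show (if (decide False = true) then 1 else 0) = 0 by simp, Nat.add_zero]
      tauto

lemma countP_pair {α : Type*} [DecidableEq α] {e e' : α} (hne : e ≠ e') (l : List α) :
    l.countP (fun x => decide (x = e ∨ x = e')) = l.count e + l.count e' := by
  induction l with
  | nil => simp
  | cons a t iht =>
    simp only [List.countP_cons, List.count_cons, iht]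
    by_cases hae : a = e <;> by_cases hae' : a = e' <;> simp_all <;> omega

open Classical in
lemma count_pair {V : Type*} {T : SimpleGraph V} {X : Set V} {e e' : Sym2 V}
    (hX : cutEdges T X = {e, e'}) (l : List (Sym2 V)) (hl : l.Nodup) (hne : e ≠ e') :
    (Even (l.countP (fun x => decide (x ∈ cutEdges T X))) ↔ (e ∈ l ↔ e' ∈ l)) := by
  have hcount : l.countP (fun x => decide (x ∈ cutEdges T X)) = l.count e + l.count e' := by
    rw [← countP_pair hne l]
    apply List.countP_congr
    intro x _
    simp [hX, Set.mem_insert_iff]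
  have hc : ∀ a, l.count a = if a ∈ l then 1 else 0 := fun a => by
    split_ifs with h
    · exact List.count_eq_one_of_mem hl h
    · exact List.count_eq_zero.mpr h
  rw [hcount, hc e, hc e']
  by_cases he : e ∈ l <;> by_cases he' : e' ∈ l <;> simp [he, he'] <;> decide

open Classical in
lemma separation_key {V : Type*} {T : SimpleGraph V} {X : Set V} {e e' : Sym2 V}
    (hX : cutEdges T X = {e, e'}) (hne : e ≠ e') {u v : V} (P : T.Walk u v)
    (hP : P.IsPath) :
    ((u ∈ X ↔ v ∈ X) ↔ (e ∈ P.edges ↔ e' ∈ P.edges)) :=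
  (walk_parity X P).trans (count_pair hX P.edges hP.edges_nodup hne)

theorem stmt_3 {V : Type*} [Fintype V] (T : SimpleGraph V) (hT : T.IsTree)
    (r : V) (M : Set (Set V))
    (hM : ∀ X ∈ M, (cutEdges T X).ncard = 2)
    -- the auxiliary graph `L` on vertex set `E(T)`, with `{e,e'}` an edge iff it is the
    -- cut edge pair of some shore in `M`
    (L : SimpleGraph (Sym2 V))
    (hL : ∀ e e' : Sym2 V, L.Adj e e' ↔ e ≠ e' ∧ ∃ X ∈ M, cutEdges T X = {e, e'})
    -- `F` is a spanning forest of `L`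
    (F : SimpleGraph (Sym2 V)) (hFL : F ≤ L) (hFacyclic : F.IsAcyclic)
    (hFspan : ∀ e e' : Sym2 V, L.Reachable e e' → F.Reachable e e')
    -- `S = {shore(f) : f ∈ E(F)}`, shores chosen not to contain the root `r`
    (S : Set (Set V))
    (hS : S = {X : Set V | r ∉ X ∧ ∃ f ∈ F.edgeSet, cutEdges T X = {e : Sym2 V | e ∈ f}}) :
    ∀ u v : V, sameAtom S u v ↔ sameAtom M u v := by
  classical
  intro u v
  obtain ⟨P, hP⟩ : ∃ p : T.Walk u v, p.IsPath := by
    obtain ⟨p⟩ := hT.isConnected.preconnected u v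
    exact ⟨p.toPath.1, p.toPath.2⟩
  -- the key separation criterion
  have hA : ∀ (X : Set V) (e e' : Sym2 V), e ≠ e' → cutEdges T X = {e, e'} →
      ((u ∈ X ↔ v ∈ X) ↔ (e ∈ P.edges ↔ e' ∈ P.edges)) :=
    fun X e e' hne hX => separation_key hX hne P hP
  -- every member of S is the shore of an F-edge
  have hScut : ∀ X ∈ S, ∃ e e' : Sym2 V, e ≠ e' ∧ cutEdges T X = {e, e'} ∧ F.Adj e e' := by
    intro X hX
    rw [hS] at hX
    obtain ⟨-, f, hf, hcut⟩ := hX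
    obtain ⟨e, e', rfl⟩ : ∃ a b, f = s(a, b) := by
      induction f using Sym2.ind with
      | _ a b => exact ⟨a, b, rfl⟩
    have hadj : F.Adj e e' := F.mem_edgeSet.mp hf
    refine ⟨e, e', hadj.ne, ?_, hadj⟩
    rw [hcut]
    ext x
    simp [Sym2.mem_iff]
  -- for each F-edge there is a shore in S
  have hSedge : ∀ a b : Sym2 V, F.Adj a b → ∃ X ∈ S, cutEdges T X = {a, b} := by
    intro a b hadj
    obtain ⟨hne, Y, hYM, hYcut⟩ := (hL a b).mp (hFL hadj)
    have hfe : s(a, b) ∈ F.edgeSet := F.mem_edgeSet.mpr hadj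
    have hset : ({x : Sym2 V | x ∈ s(a, b)} : Set (Sym2 V)) = {a, b} := by
      ext x; simp [Sym2.mem_iff]
    by_cases hr : r ∈ Y
    · refine ⟨Yᶜ, ?_, by rw [cutEdges_compl, hYcut]⟩
      rw [hS]
      exact ⟨by simpa using hr, s(a, b), hfe, by rw [cutEdges_compl, hYcut, hset]⟩
    · refine ⟨Y, ?_, hYcut⟩
      rw [hS]
      exact ⟨hr, s(a, b), hfe, by rw [hYcut, hset]⟩
  constructor
  · -- sameAtom S → sameAtom M
    intro hSame Y hY
    obtain ⟨a, b, hne, hcut⟩ := Set.ncard_eq_two.mp (hM Y hY)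
    have hLadj : L.Adj a b := (hL a b).mpr ⟨hne, Y, hY, hcut⟩
    have hFr : F.Reachable a b := hFspan a b hLadj.reachable
    have hφ : a ∈ P.edges ↔ b ∈ P.edges := by
      obtain ⟨w⟩ := hFr
      clear hLadj hcut hne
      induction w with
      | nil => rfl
      | @cons x y z h q ih =>
        obtain ⟨X, hXS, hXcut⟩ := hSedge x y h
        exact ((hA X x y h.ne hXcut).mp (hSame X hXS)).trans ih
    exact (hA Y a b hne hcut).mpr hφ
  · -- sameAtom M → sameAtom S
    intro hSame X hXS
    obtain ⟨e, e', hne, hXcut, hadj⟩ := hScut X hXS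
    obtain ⟨-, Y, hYM, hYcut⟩ := (hL e e').mp (hFL hadj)
    have hφ : e ∈ P.edges ↔ e' ∈ P.edges :=
      (hA Y e e' hne hYcut).mp (hSame Y hYM)
    exact (hA X e e' hne hXcut).mpr hφ
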